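/- Let P be a finite set of 2n points in ℝ² with no three points of P collinear. If σ₁ and σ₂ are both fixed-point-free involutions on P whose matchings are pairwise crossing (i.e., for σ ∈ {σ₁, σ₂}, any two distinct edges {x, σ(x)} and {y, σ(y)} cross), then σ₁ = σ₂. That is, a pairwise crossing perfect matching on a point set in general position is unique if it exists. -/

import Mathlib

noncomputable section

/-- The Euclidean plane. -/
abbrev Pt : Type := EuclideanSpace ℝ (Fin 2)

instance : DecidableEq Pt := Classical.decEq _

/-- The cross product of `y - x` and `z - x`. -/
def cr (x y z : Pt) : ℝ := (y 0 - x 0) * (z 1 - x 1) - (y 1 - x 1) * (z 0 - x 0)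

/-- Lexicographic order on points. -/
def lexlt (a b : Pt) : Prop := a 0 < b 0 ∨ (a 0 = b 0 ∧ a 1 < b 1)

lemma pt_ext {x y : Pt} (h0 : x 0 = y 0) (h1 : x 1 = y 1) : x = y := by
  ext i
  fin_cases i
  · exact h0
  · exact h1

lemma collinear_of_cr_eq_zero {x y z : Pt} (h : cr x y z = 0) (hxy : y ≠ x) :
    Collinear ℝ ({x, y, z} : Set Pt) := by
  have hv : (y 0 - x 0) ≠ 0 ∨ (y 1 - x 1) ≠ 0 := by
    by_contra hc
    push_neg at hc
    exact hxy (pt_ext (by linarith [hc.1]) (by linarith [hc.2]))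
  apply collinear_iff_of_mem (Set.mem_insert x _) |>.2
  unfold cr at h
  refine ⟨y - x, ?_⟩
  intro p hp
  have key : ∀ t : ℝ, p 0 - x 0 = t * (y 0 - x 0) → p 1 - x 1 = t * (y 1 - x 1) →
      ∃ r : ℝ, p = r • (y - x) +ᵥ x := by
    intro t h0 h1
    refine ⟨t, ?_⟩
    apply pt_ext
    · simp only [vadd_eq_add, PiLp.add_apply, PiLp.smul_apply, PiLp.sub_apply, smul_eq_mul]
      linarith
    · simp only [vadd_eq_add, PiLp.add_apply, PiLp.smul_apply, PiLp.sub_apply, smul_eq_mul]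
      linarith
  rcases hp with rfl | rfl | rfl
  · exact key 0 (by ring) (by ring)
  · exact key 1 (by ring) (by ring)
  · rcases hv with h0 | h1
    · exact key ((p 0 - x 0) / (y 0 - x 0)) (by field_simp) (by field_simp; nlinarith [h])
    · exact key ((p 1 - x 1) / (y 1 - x 1)) (by field_simp; nlinarith [h]) (by field_simp)

/-- Transitivity of the angular order around a lexicographically maximal point. -/
lemma cr_trans {x y y' z : Pt} (hy : lexlt y x) (hy' : lexlt y' x) (hz : lexlt z x)
    (h1 : 0 < cr x y y') (h2 : 0 < cr x y' z) : 0 < cr x y z := by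
  by_contra hc
  push_neg at hc
  have id0 : cr x y z * (y' 0 - x 0) = cr x y' z * (y 0 - x 0) + cr x y y' * (z 0 - x 0) := by
    unfold cr; ring
  have id1 : cr x y z * (y' 1 - x 1) = cr x y' z * (y 1 - x 1) + cr x y y' * (z 1 - x 1) := by
    unfold cr; ring
  have hy0 : y 0 - x 0 ≤ 0 := by rcases hy with h | ⟨h, _⟩ <;> linarith
  have hy'0 : y' 0 - x 0 ≤ 0 := by rcases hy' with h | ⟨h, _⟩ <;> linarith
  have hz0 : z 0 - x 0 ≤ 0 := by rcases hz with h | ⟨h, _⟩ <;> linarith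
  have hL : 0 ≤ cr x y z * (y' 0 - x 0) := by nlinarith
  have hR1 : cr x y' z * (y 0 - x 0) ≤ 0 := mul_nonpos_of_nonneg_of_nonpos h2.le hy0
  have hR2 : cr x y y' * (z 0 - x 0) ≤ 0 := mul_nonpos_of_nonneg_of_nonpos h1.le hz0
  have hy00 : y 0 - x 0 = 0 := by nlinarith
  have hz00 : z 0 - x 0 = 0 := by nlinarith
  have hy1 : y 1 - x 1 < 0 := by rcases hy with h | ⟨_, h⟩ <;> linarith
  have hz1 : z 1 - x 1 < 0 := by rcases hz with h | ⟨_, h⟩ <;> linarith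
  have hneg : cr x y z * (y' 1 - x 1) < 0 := by rw [id1]; nlinarith
  have hcrne : cr x y z < 0 := by
    rcases lt_or_eq_of_le hc with h | h
    · exact h
    · rw [h] at hneg; simp at hneg
  have hy'00 : y' 0 - x 0 = 0 := by nlinarith
  have hy'1 : y' 1 - x 1 < 0 := by rcases hy' with h | ⟨_, h⟩ <;> linarith
  nlinarith

lemma cr_affine {x y p q r : Pt} {a b : ℝ} (hab : a + b = 1)
    (hp : p = a • q + b • r) : cr x y p = a * cr x y q + b * cr x y r := by
  have h0 : p 0 = a * q 0 + b * r 0 := by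
    rw [hp]; simp [PiLp.add_apply, PiLp.smul_apply, smul_eq_mul]
  have h1 : p 1 = a * q 1 + b * r 1 := by
    rw [hp]; simp [PiLp.add_apply, PiLp.smul_apply, smul_eq_mul]
  unfold cr
  rw [h0, h1]
  linear_combination (x 1 * (y 0 - x 0) - x 0 * (y 1 - x 1)) * hab

/-- A segment crossing the open segment from `x` to `b` has endpoints with opposite
signs of `cr x b ·`. -/
lemma opp_sign {x b y z : Pt}
    (h : (openSegment ℝ x b ∩ openSegment ℝ y z).Nonempty)
    (hy : cr x b y ≠ 0) (hz : cr x b z ≠ 0) : cr x b y * cr x b z < 0 := by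
  obtain ⟨p, hp1, hp2⟩ := h
  rw [openSegment] at hp1 hp2
  obtain ⟨a1, b1, ha1, hb1, hab1, hp1⟩ := hp1
  obtain ⟨a2, b2, ha2, hb2, hab2, hp2⟩ := hp2
  have e1 : cr x b p = a1 * cr x b x + b1 * cr x b b := cr_affine hab1 hp1.symm
  have e2 : cr x b p = a2 * cr x b y + b2 * cr x b z := cr_affine hab2 hp2.symm
  have hx0 : cr x b x = 0 := by unfold cr; ring
  have hb0 : cr x b b = 0 := by unfold cr; ring
  rw [hx0, hb0] at e1
  simp at e1
  rw [e1] at e2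
  by_contra hge
  push_neg at hge
  have e3 : 0 = a2 * (cr x b y * cr x b y) + b2 * (cr x b z * cr x b y) := by
    linear_combination cr x b y * e2
  nlinarith [mul_pos ha2 (mul_self_pos.mpr hy), mul_nonneg hb2.le hge, e3]

/-- In a pairwise crossing matching, each edge is a halving edge. -/
lemma halving (P : Finset Pt)
    (hgen : ∀ x ∈ P, ∀ y ∈ P, ∀ z ∈ P, x ≠ y → x ≠ z → y ≠ z →
      ¬ Collinear ℝ ({x, y, z} : Set Pt))
    (σ : Pt → Pt)
    (hmap : ∀ x ∈ P, σ x ∈ P) (hinv : ∀ x ∈ P, σ (σ x) = x)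
    (hfpf : ∀ x ∈ P, σ x ≠ x)
    (hcross : ∀ x ∈ P, ∀ y ∈ P, ({x, σ x} : Set Pt) ≠ {y, σ y} →
      (openSegment ℝ x (σ x) ∩ openSegment ℝ y (σ y)).Nonempty)
    (x : Pt) (hx : x ∈ P) :
    2 * ((((P.erase x).erase (σ x)).filter (fun z => 0 < cr x (σ x) z)).card) + 2 = P.card := by
  set b := σ x with hb
  have hbP : b ∈ P := hmap x hx
  have hbx : b ≠ x := hfpf x hx
  set P' := (P.erase x).erase b with hP'
  have hmem : ∀ z, z ∈ P' ↔ z ∈ P ∧ z ≠ x ∧ z ≠ b := by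
    intro z
    simp [hP', Finset.mem_erase]
    tauto
  have hne0 : ∀ z ∈ P', cr x b z ≠ 0 := by
    intro z hz hcr0
    obtain ⟨hzP, hzx, hzb⟩ := (hmem z).1 hz
    exact hgen x hx b hbP z hzP hbx.symm (Ne.symm hzx) (Ne.symm hzb)
      (collinear_of_cr_eq_zero hcr0 hbx)
  have hσmem : ∀ z ∈ P', σ z ∈ P' := by
    intro z hz
    obtain ⟨hzP, hzx, hzb⟩ := (hmem z).1 hz
    refine (hmem (σ z)).2 ⟨hmap z hzP, ?_, ?_⟩
    · intro h; exact hzb (by rw [← hinv z hzP, h, ← hb])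
    · intro h
      apply hzx
      rw [← hinv z hzP, h, hb, hinv x hx]
  have hopp : ∀ z ∈ P', cr x b z * cr x b (σ z) < 0 := by
    intro z hz
    obtain ⟨hzP, hzx, hzb⟩ := (hmem z).1 hz
    refine opp_sign (hcross x hx z hzP ?_) (hne0 z hz) (hne0 (σ z) (hσmem z hz))
    intro h
    have hzmem : z ∈ ({x, σ x} : Set Pt) := by rw [h]; simp
    rcases hzmem with h' | h'
    · exact hzx h'
    · exact hzb h'
  set A := P'.filter (fun z => 0 < cr x b z) with hA
  set B := P'.filter (fun z => cr x b z < 0) with hB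
  have hcards : A.card = B.card := by
    apply Finset.card_bij' (fun z _ => σ z) (fun z _ => σ z)
    · intro a ha
      rw [hA, Finset.mem_filter] at ha
      rw [hB, Finset.mem_filter]
      refine ⟨hσmem a ha.1, ?_⟩
      nlinarith [hopp a ha.1, ha.2]
    · intro a ha
      rw [hB, Finset.mem_filter] at ha
      rw [hA, Finset.mem_filter]
      refine ⟨hσmem a ha.1, ?_⟩
      nlinarith [hopp a ha.1, ha.2]
    · intro a ha
      rw [hA, Finset.mem_filter] at ha
      exact hinv a ((hmem a).1 ha.1).1
    · intro a ha
      rw [hB, Finset.mem_filter] at ha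
      exact hinv a ((hmem a).1 ha.1).1
  have hAB : A.card + B.card = P'.card := by
    have h1 := Finset.card_filter_add_card_filter_not
      (s := P') (p := fun z => 0 < cr x b z)
    have h2 : P'.filter (fun z => ¬ 0 < cr x b z) = B := by
      ext z
      rw [hB, Finset.mem_filter, Finset.mem_filter]
      constructor
      · rintro ⟨hz, hn⟩
        exact ⟨hz, lt_of_le_of_ne (not_lt.1 hn) (hne0 z hz)⟩
      · rintro ⟨hz, hn⟩
        exact ⟨hz, by linarith⟩
    rw [h2] at h1
    exact h1
  have hP'card : P'.card = P.card - 2 := by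
    have hbP' : b ∈ P.erase x := Finset.mem_erase.2 ⟨hbx, hbP⟩
    rw [hP', Finset.card_erase_of_mem hbP', Finset.card_erase_of_mem hx]
    omega
  have h2le : 2 ≤ P.card := by
    have hs : ({b, x} : Finset Pt) ⊆ P := by
      intro z hz
      rcases Finset.mem_insert.1 hz with rfl | hz
      · exact hbP
      · rw [Finset.mem_singleton.1 hz]; exact hx
    have := Finset.card_le_card hs
    rwa [Finset.card_pair hbx] at this
  omega

lemma cardA_lt (P : Finset Pt)
    (hgen : ∀ x ∈ P, ∀ y ∈ P, ∀ z ∈ P, x ≠ y → x ≠ z → y ≠ z →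
      ¬ Collinear ℝ ({x, y, z} : Set Pt))
    (x : Pt) (hx : x ∈ P) (hmax : ∀ z ∈ P, z ≠ x → lexlt z x)
    (y : Pt) (hyP : y ∈ P) (hyx : y ≠ x)
    (y' : Pt) (hy'P : y' ∈ P) (hy'x : y' ≠ x)
    (hpos : 0 < cr x y y') :
    (((P.erase x).erase y').filter (fun z => 0 < cr x y' z)).card <
      (((P.erase x).erase y).filter (fun z => 0 < cr x y z)).card := by
  have hyy' : y ≠ y' := by
    intro h
    rw [h] at hpos
    have : cr x y' y' = 0 := by unfold cr; ring
    rw [this] at hpos; exact lt_irrefl 0 hpos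
  set A' := ((P.erase x).erase y').filter (fun z => 0 < cr x y' z) with hA'
  set A := ((P.erase x).erase y).filter (fun z => 0 < cr x y z) with hA
  have hy'A' : y' ∉ A' := by
    rw [hA']
    intro h
    have := Finset.mem_of_mem_filter y' h
    rw [Finset.mem_erase] at this
    exact this.1 rfl
  have hsub : insert y' A' ⊆ A := by
    intro z hz
    rcases Finset.mem_insert.1 hz with rfl | hz
    · rw [hA, Finset.mem_filter, Finset.mem_erase, Finset.mem_erase]
      exact ⟨⟨Ne.symm hyy', hy'x, hy'P⟩, hpos⟩
    · rw [hA', Finset.mem_filter, Finset.mem_erase, Finset.mem_erase] at hz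
      obtain ⟨⟨hzy', hzx, hzP⟩, hcr⟩ := hz
      have hzy : z ≠ y := by
        intro h
        subst h
        have : cr x y' z = - cr x z y' := by unfold cr; ring
        rw [this] at hcr; linarith
      rw [hA, Finset.mem_filter, Finset.mem_erase, Finset.mem_erase]
      refine ⟨⟨hzy, hzx, hzP⟩, ?_⟩
      exact cr_trans (hmax y hyP hyx) (hmax y' hy'P hy'x) (hmax z hzP hzx) hpos hcr
  calc A'.card < (insert y' A').card := by
        rw [Finset.card_insert_of_notMem hy'A']; omega
    _ ≤ A.card := Finset.card_le_card hsub

lemma median_unique (P : Finset Pt)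
    (hgen : ∀ x ∈ P, ∀ y ∈ P, ∀ z ∈ P, x ≠ y → x ≠ z → y ≠ z →
      ¬ Collinear ℝ ({x, y, z} : Set Pt))
    (x : Pt) (hx : x ∈ P) (hmax : ∀ z ∈ P, z ≠ x → lexlt z x)
    (y : Pt) (hyP : y ∈ P) (hyx : y ≠ x)
    (y' : Pt) (hy'P : y' ∈ P) (hy'x : y' ≠ x)
    (hc : (((P.erase x).erase y).filter (fun z => 0 < cr x y z)).card =
      (((P.erase x).erase y').filter (fun z => 0 < cr x y' z)).card) :
    y = y' := by
  by_contra hne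
  have hcr0 : cr x y y' ≠ 0 := by
    intro h
    exact hgen x hx y hyP y' hy'P (Ne.symm hyx) (Ne.symm hy'x) hne
      (collinear_of_cr_eq_zero h hyx)
  rcases lt_trichotomy (cr x y y') 0 with h | h | h
  · have hpos : 0 < cr x y' y := by
      have : cr x y' y = - cr x y y' := by unfold cr; ring
      rw [this]; linarith
    have := cardA_lt P hgen x hx hmax y' hy'P hy'x y hyP hyx hpos
    omega
  · exact hcr0 h
  · have := cardA_lt P hgen x hx hmax y hyP hyx y' hy'P hy'x h
    omega

theorem pairwise_crossing_unique (n : ℕ)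
    (P : Finset Pt) (hcard : P.card = 2 * n)
    (hgen : ∀ x ∈ P, ∀ y ∈ P, ∀ z ∈ P, x ≠ y → x ≠ z → y ≠ z →
      ¬ Collinear ℝ ({x, y, z} : Set Pt))
    (σ₁ σ₂ : Pt → Pt)
    (hmap₁ : ∀ x ∈ P, σ₁ x ∈ P) (hinv₁ : ∀ x ∈ P, σ₁ (σ₁ x) = x)
    (hfpf₁ : ∀ x ∈ P, σ₁ x ≠ x)
    (hcross₁ : ∀ x ∈ P, ∀ y ∈ P, ({x, σ₁ x} : Set Pt) ≠ {y, σ₁ y} →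
      (openSegment ℝ x (σ₁ x) ∩ openSegment ℝ y (σ₁ y)).Nonempty)
    (hmap₂ : ∀ x ∈ P, σ₂ x ∈ P) (hinv₂ : ∀ x ∈ P, σ₂ (σ₂ x) = x)
    (hfpf₂ : ∀ x ∈ P, σ₂ x ≠ x)
    (hcross₂ : ∀ x ∈ P, ∀ y ∈ P, ({x, σ₂ x} : Set Pt) ≠ {y, σ₂ y} →
      (openSegment ℝ x (σ₂ x) ∩ openSegment ℝ y (σ₂ y)).Nonempty) :
    Set.EqOn σ₁ σ₂ (P : Set Pt) := by
  induction n generalizing P σ₁ σ₂ with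
  | zero =>
    have hP : P = ∅ := Finset.card_eq_zero.1 (by omega)
    intro p hp
    rw [hP] at hp
    simp at hp
  | succ n ih =>
    -- find the lexicographically maximal point x of P
    have hne : P.Nonempty := Finset.card_pos.1 (by omega)
    obtain ⟨v, hvP, hv⟩ := P.exists_max_image (fun p => p 0) hne
    have hQne : (P.filter (fun p => p 0 = v 0)).Nonempty :=
      ⟨v, Finset.mem_filter.2 ⟨hvP, rfl⟩⟩
    obtain ⟨x, hxQ, hx1⟩ := (P.filter (fun p => p 0 = v 0)).exists_max_image
      (fun p => p 1) hQne
    have hxP : x ∈ P := (Finset.mem_filter.1 hxQ).1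
    have hx0 : x 0 = v 0 := (Finset.mem_filter.1 hxQ).2
    have hmax : ∀ z ∈ P, z ≠ x → lexlt z x := by
      intro z hz hzx
      have hz0 : z 0 ≤ x 0 := by rw [hx0]; exact hv z hz
      rcases lt_or_eq_of_le hz0 with h | h
      · exact Or.inl h
      · refine Or.inr ⟨h, ?_⟩
        have hzQ : z ∈ P.filter (fun p => p 0 = v 0) :=
          Finset.mem_filter.2 ⟨hz, by rw [← hx0, h]⟩
        have hz1 : z 1 ≤ x 1 := hx1 z hzQ
        rcases lt_or_eq_of_le hz1 with h1 | h1
        · exact h1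
        · exact absurd (pt_ext h h1) hzx
    -- the two partners of x agree
    have h1 := halving P hgen σ₁ hmap₁ hinv₁ hfpf₁ hcross₁ x hxP
    have h2 := halving P hgen σ₂ hmap₂ hinv₂ hfpf₂ hcross₂ x hxP
    have hbb : σ₁ x = σ₂ x := by
      apply median_unique P hgen x hxP hmax (σ₁ x) (hmap₁ x hxP) (hfpf₁ x hxP)
        (σ₂ x) (hmap₂ x hxP) (hfpf₂ x hxP)
      omega
    set b := σ₁ x with hb
    have hbP : b ∈ P := hmap₁ x hxP
    have hbx : b ≠ x := hfpf₁ x hxP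
    set P' := (P.erase x).erase b with hP'
    have hmem : ∀ z, z ∈ P' ↔ z ∈ P ∧ z ≠ x ∧ z ≠ b := by
      intro z
      simp [hP', Finset.mem_erase]
      tauto
    have hsub : ∀ z ∈ P', z ∈ P := fun z hz => ((hmem z).1 hz).1
    have hcard' : P'.card = 2 * n := by
      have hbP'' : b ∈ P.erase x := Finset.mem_erase.2 ⟨hbx, hbP⟩
      rw [hP', Finset.card_erase_of_mem hbP'', Finset.card_erase_of_mem hxP]
      omega
    have hσmem : ∀ (σ : Pt → Pt), σ x = b → (∀ w ∈ P, σ w ∈ P) →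
        (∀ w ∈ P, σ (σ w) = w) → ∀ z ∈ P', σ z ∈ P' := by
      intro σ hσx hm hi z hz
      obtain ⟨hzP, hzx, hzb⟩ := (hmem z).1 hz
      refine (hmem (σ z)).2 ⟨hm z hzP, ?_, ?_⟩
      · intro h; exact hzb (by rw [← hi z hzP, h, hσx])
      · intro h
        apply hzx
        rw [← hi z hzP, h, ← hσx, hi x hxP]
    have hEq := ih P' hcard'
      (fun a ha y hy z hz => hgen a (hsub a ha) y (hsub y hy) z (hsub z hz))
      σ₁ σ₂
      (hσmem σ₁ rfl hmap₁ hinv₁)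
      (fun z hz => hinv₁ z (hsub z hz))
      (fun z hz => hfpf₁ z (hsub z hz))
      (fun a ha y hy h => hcross₁ a (hsub a ha) y (hsub y hy) h)
      (hσmem σ₂ hbb.symm hmap₂ hinv₂)
      (fun z hz => hinv₂ z (hsub z hz))
      (fun z hz => hfpf₂ z (hsub z hz))
      (fun a ha y hy h => hcross₂ a (hsub a ha) y (hsub y hy) h)
    intro p hp
    rw [Finset.mem_coe] at hp
    by_cases hpx : p = x
    · subst hpx; exact hbb
    · by_cases hpb : p = b
      · subst hpb
        have e1 : σ₁ b = x := by rw [hb]; exact hinv₁ x hxP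
        have e2 : σ₂ b = x := by rw [hbb]; exact hinv₂ x hxP
        show σ₁ b = σ₂ b
        rw [e1, e2]
      · exact hEq (Finset.mem_coe.2 ((hmem p).2 ⟨hp, hpx, hpb⟩))
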